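/- Running lemma for RI (Lemma 2): let π be a program satisfying removal of inputs with π(I) ⇓ O. In the enforcement mechanism for removal of inputs, regardless of the order in which the local executions are scheduled, if the low execution consumes the same low input items as in I and the high execution consumes the high and low input items as in I, then the execution of the enforcement mechanism terminates, and the input queue I* it consumes satisfies I*|_c = I|_c for every input channel c. -/

import Mathlib

namespace MapReduce

/-- Security levels: high (`H`) and low (`L`). -/
inductive SecLevel
  | H | L
deriving DecidableEq

/-- Channels (input/output channels, identified by names). -/
abbrev Chan := String

/-- Values: booleans and non-negative integers. -/
inductive Val
  | bool (b : Bool)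
  | nat (n : ℕ)
deriving DecidableEq

/-- An input/output vector, defined (≠ ⊥) on exactly one channel. -/
structure Vec where
  ch : Chan
  val : Val
deriving DecidableEq

/-- Queues of vectors. -/
abbrev Queue := List Vec

/-- `Q|_c`: the subsequence of vectors of `Q` defined on channel `c`. -/
def restrictC (Q : Queue) (c : Chan) : Queue :=
  Q.filter (fun v => decide (v.ch = c))

/-- `Q|_l`: the subsequence of vectors of `Q` defined on a channel of level `l`. -/
def restrictL (lvl : Chan → SecLevel) (Q : Queue) (l : SecLevel) : Queue :=
  Q.filter (fun v => decide (lvl v.ch = l))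

/-- Low equality `Q =_L Q'`. -/
def lowEq (lvl : Chan → SecLevel) (Q Q' : Queue) : Prop :=
  restrictL lvl Q SecLevel.L = restrictL lvl Q' SecLevel.L

/-- `dequeue Q c`: the value of the first vector of `Q` defined on channel `c`,
together with the queue obtained by removing that vector (or `none`). -/
def dequeue : Queue → Chan → Option (Val × Queue)
  | [], _ => none
  | v :: Q, c =>
    if v.ch = c then some (v.val, Q)
    else (dequeue Q c).map (fun p => (p.1, v :: p.2))

abbrev Var := String

inductive Expr
  | var (x : Var)
  | const (v : Val)
deriving DecidableEq

abbrev Mem := Var → Val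

def Expr.eval (m : Mem) : Expr → Val
  | .var x => m x
  | .const v => v

/-- The initial memory, mapping every variable to the initial value. -/
def Mem.init : Mem := fun _ => Val.nat 0

/-- The while-language of controlled programs. -/
inductive Prog
  | assign (x : Var) (e : Expr)
  | seq (p q : Prog)
  | ite (e : Expr) (p q : Prog)
  | while (e : Expr) (p : Prog)
  | skip
  | input (x : Var) (c : Chan)
  | output (e : Expr) (c : Chan)
deriving DecidableEq

/-- Configurations of controlled programs. -/
structure PConf where
  prg : Prog
  mem : Mem
  inq : Queue
  outq : Queue

/-- Small-step semantics of controlled programs. -/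
inductive PStep : PConf → PConf → Prop
  | assign : PStep ⟨.assign x e, m, I, O⟩ ⟨.skip, Function.update m x (e.eval m), I, O⟩
  | seqStep : PStep ⟨p, m, I, O⟩ ⟨p', m', I', O'⟩ →
      PStep ⟨.seq p q, m, I, O⟩ ⟨.seq p' q, m', I', O'⟩
  | seqSkip : PStep ⟨.seq .skip q, m, I, O⟩ ⟨q, m, I, O⟩
  | iteT : e.eval m = .bool true → PStep ⟨.ite e p q, m, I, O⟩ ⟨p, m, I, O⟩
  | iteF : e.eval m = .bool false → PStep ⟨.ite e p q, m, I, O⟩ ⟨q, m, I, O⟩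
  | whileT : e.eval m = .bool true →
      PStep ⟨.while e p, m, I, O⟩ ⟨.seq p (.while e p), m, I, O⟩
  | whileF : e.eval m = .bool false → PStep ⟨.while e p, m, I, O⟩ ⟨.skip, m, I, O⟩
  | inp : dequeue I c = some (v, I') →
      PStep ⟨.input x c, m, I, O⟩ ⟨.skip, Function.update m x v, I', O⟩
  | out : PStep ⟨.output e c, m, I, O⟩ ⟨.skip, m, I, O ++ [⟨c, e.eval m⟩]⟩

/-- `π(I) ⇓ O`: the program terminates with the input queue completely consumed
and output queue `O`. -/
def BigStep (p : Prog) (I O : Queue) : Prop :=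
  ∃ m, Relation.ReflTransGen PStep ⟨p, Mem.init, I, []⟩ ⟨.skip, m, [], O⟩

/-- Termination-insensitive non-interference. -/
def TINI (lvl : Chan → SecLevel) (p : Prog) : Prop :=
  ∀ I I' O O', lowEq lvl I I' → BigStep p I O → BigStep p I' O' → lowEq lvl O O'

/-- Termination-sensitive non-interference. -/
def TSNI (lvl : Chan → SecLevel) (p : Prog) : Prop :=
  ∀ I I' O, lowEq lvl I I' → BigStep p I O →
    ∃ O', BigStep p I' O' ∧ lowEq lvl O' O

/-- Removal of inputs, at a fixed choice of the default value. -/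
def RIat (lvl : Chan → SecLevel) (vdef : Val) (p : Prog) : Prop :=
  ∀ I O, BigStep p I O →
    ∃ I' O', lowEq lvl I' I ∧
      (∀ v ∈ I', lvl v.ch = SecLevel.H → v.val = vdef) ∧
      (∀ c, (restrictC I' c).length ≤ (restrictC I c).length) ∧
      BigStep p I' O' ∧ lowEq lvl O' O

/-- Removal of inputs (for every choice of the default value). -/
def RI (lvl : Chan → SecLevel) (p : Prog) : Prop := ∀ vdef, RIat lvl vdef p

/-- Deletion of inputs, at a fixed choice of the default value. -/
def DIat (lvl : Chan → SecLevel) (vdef : Val) (p : Prog) : Prop :=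
  ∀ (I1 : Queue) (v : Vec) (I2 : Queue) (O : Queue), lvl v.ch = SecLevel.H →
    (∀ w ∈ I2, lvl w.ch = SecLevel.H → w.val = vdef) →
    BigStep p (I1 ++ v :: I2) O →
    ∃ I1' I2' O', lowEq lvl (I1' ++ I2') (I1 ++ v :: I2) ∧
      (∀ w ∈ I2', lvl w.ch = SecLevel.H → w.val = vdef) ∧
      BigStep p (I1' ++ I2') O' ∧ lowEq lvl O' O

/-- Deletion of inputs (for every choice of the default value). -/
def DI (lvl : Chan → SecLevel) (p : Prog) : Prop := ∀ vdef, DIat lvl vdef p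

/-! ### The enforcement mechanism -/

/-- Interrupt signals: input request or output request on a channel. -/
inductive Sig
  | inSig (c : Chan)
  | outSig (c : Chan)
deriving DecidableEq

/-- States of a local execution: executing or sleeping. -/
inductive LState
  | E | S
deriving DecidableEq

/-- Configuration of a local execution (with instrumentation recording the
items it has received from MAP and the items it has consumed). -/
structure LocalConf where
  stt : LState
  intr : Option Sig
  prg : Prog
  mem : Mem
  inq : Queue
  outq : Queue
  /-- instrumentation: items delivered by MAP to this local input queue, in order -/
  received : Queue
  /-- instrumentation: items consumed from the local input queue, in order -/
  consumed : Queue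

instance : Inhabited LocalConf :=
  ⟨⟨.E, none, .skip, Mem.init, [], [], [], []⟩⟩

def LocalConf.init (p : Prog) : LocalConf :=
  ⟨.E, none, p, Mem.init, [], [], [], []⟩

/-- Semantics of local executions (rules LINP1, LINP2, LOUTP and the standard
rules, executed only in state `E` with no pending signal). -/
inductive LStep : LocalConf → LocalConf → Prop
  | assign : LStep ⟨.E, none, .assign x e, m, I, O, r, cs⟩
      ⟨.E, none, .skip, Function.update m x (e.eval m), I, O, r, cs⟩
  | seqStep : LStep ⟨.E, none, p, m, I, O, r, cs⟩ ⟨st, sg, p', m', I', O', r', cs'⟩ →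
      LStep ⟨.E, none, .seq p q, m, I, O, r, cs⟩ ⟨st, sg, .seq p' q, m', I', O', r', cs'⟩
  | seqSkip : LStep ⟨.E, none, .seq .skip q, m, I, O, r, cs⟩ ⟨.E, none, q, m, I, O, r, cs⟩
  | iteT : e.eval m = .bool true →
      LStep ⟨.E, none, .ite e p q, m, I, O, r, cs⟩ ⟨.E, none, p, m, I, O, r, cs⟩
  | iteF : e.eval m = .bool false →
      LStep ⟨.E, none, .ite e p q, m, I, O, r, cs⟩ ⟨.E, none, q, m, I, O, r, cs⟩
  | whileT : e.eval m = .bool true →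
      LStep ⟨.E, none, .while e p, m, I, O, r, cs⟩
        ⟨.E, none, .seq p (.while e p), m, I, O, r, cs⟩
  | whileF : e.eval m = .bool false →
      LStep ⟨.E, none, .while e p, m, I, O, r, cs⟩ ⟨.E, none, .skip, m, I, O, r, cs⟩
  | inp1 : dequeue I c = some (v, I') →
      LStep ⟨.E, none, .input x c, m, I, O, r, cs⟩
        ⟨.E, none, .skip, Function.update m x v, I', O, r, cs ++ [⟨c, v⟩]⟩
  | inp2 : dequeue I c = none →
      LStep ⟨.E, none, .input x c, m, I, O, r, cs⟩
        ⟨.S, some (.inSig c), .input x c, m, I, O, r, cs⟩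
  | out : LStep ⟨.E, none, .output e c, m, I, O, r, cs⟩
      ⟨.S, some (.outSig c), .skip, m, I, O ++ [⟨c, e.eval m⟩], r, cs⟩

/-- The three enforcement mechanisms. -/
inductive Mech
  | NI | RI | DI
deriving DecidableEq

/-- Ask privilege of execution `i` on input channel `c`: MAP performs an actual
read of the global input queue for the request `(i, c)`. -/
def canAsk : Mech → (Chan → SecLevel) → ℕ → Chan → Prop
  | .NI, lvl, i, c => (i = 0 ∧ lvl c = .H) ∨ (i = 1 ∧ lvl c = .L)
  | .RI, lvl, i, c => i = 1 ∨ (i = 0 ∧ lvl c = .H)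
  | .DI, lvl, i, c => (i = 0 ∧ lvl c = .H) ∨ (i = 1 ∧ lvl c = .L)

/-- Requests answered by MAP with the default value, without consuming global input. -/
def defaultAnswer : Mech → (Chan → SecLevel) → ℕ → Chan → Prop
  | .NI, lvl, i, c => i = 1 ∧ lvl c = .H
  | .RI, _, _, _ => False
  | .DI, lvl, i, c => 1 ≤ i ∧ lvl c = .H

/-- Requests on which MAP only removes the signal (the requester keeps
sleeping, waiting for the item to be read on behalf of another execution). -/
def skipAnswer : Mech → (Chan → SecLevel) → ℕ → Chan → Prop
  | .NI, lvl, i, c => i = 0 ∧ lvl c = .L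
  | .RI, lvl, i, c => i = 0 ∧ lvl c = .L
  | .DI, lvl, i, c => i ≠ 1 ∧ lvl c = .L

/-- The channel of the first instruction to be executed, if it is an input. -/
def Prog.headInput : Prog → Option (Var × Chan)
  | .input x c => some (x, c)
  | .seq p _ => p.headInput
  | _ => none

/-- Send a vector to the local input queue of a local execution. -/
def sendTo (l : LocalConf) (v : Vec) : LocalConf :=
  { l with inq := l.inq ++ [v], received := l.received ++ [v] }

/-- The channel the local execution is sleeping on (waiting for an input). -/
def LocalConf.waitChanI (l : LocalConf) : Option Chan :=
  if l.stt = LState.S then l.prg.headInput.map Prod.snd else none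

/-- `isReady(c)`: the execution sleeps waiting for an input on `c` and the item is present. -/
def readyOn (l : LocalConf) (c : Chan) : Prop :=
  l.waitChanI = some c ∧ (dequeue l.inq c).isSome = true

instance (l : LocalConf) (c : Chan) : Decidable (readyOn l c) := by
  unfold readyOn; infer_instance

/-- `wake(isReady(c))` applied to a single local execution. -/
def wakeReadyOn (c : Chan) (l : LocalConf) : LocalConf :=
  if readyOn l c then { l with stt := .E, intr := none } else l

/-- `wake(identical(i))` applied to the requester itself. -/
def wakeNow (l : LocalConf) : LocalConf := { l with stt := .E, intr := none }

/-- Distribution of a value read on channel `c`: the high execution (index 0)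
always receives the real value; other executions receive the real value on low
channels and the default value on high channels (the `tell` privilege); then all
executions whose requested input is ready on `c` are woken. -/
def broadcast (lvl : Chan → SecLevel) (vdef : Val) (c : Chan) (v : Val)
    (locs : List LocalConf) : List LocalConf :=
  (locs.mapIdx (fun j l =>
      sendTo l ⟨c, if j = 0 ∨ lvl c = SecLevel.L then v else vdef⟩)).map (wakeReadyOn c)

/-- In the DI mechanism, a high-channel request of the high execution first
clones the configuration of the high execution onto the stack (state `S`). -/
def preClone (M : Mech) (lvl : Chan → SecLevel) (i : ℕ) (c : Chan)
    (locs : List LocalConf) : List LocalConf :=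
  if M = Mech.DI ∧ i = 0 ∧ lvl c = SecLevel.H then
    locs ++ [{ locs.headI with stt := LState.S, intr := none }]
  else locs

/-- Agents performing steps of the enforcement mechanism: a local execution,
MAP activated on an input request, or REDUCE activated on an output request. -/
inductive Agent
  | loc (i : ℕ)
  | mapA (i : ℕ) (c : Chan)
  | redA (i : ℕ) (c : Chan)
deriving DecidableEq

/-- Configuration of the enforcement mechanism (stack of local executions,
global input and output queues, plus instrumentation recording the items
consumed from the global input queue, in order). -/
structure EMConf where
  locs : List LocalConf
  gin : Queue
  gout : Queue
  /-- instrumentation: items consumed from the global input queue, in order -/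
  gconsumed : Queue

def EMConf.locAt (γ : EMConf) (i : ℕ) : LocalConf := γ.locs.getD i default

/-- Semantics of the enforcement mechanism, as the interleaving of atomic steps
of the local executions, of MAP, and of REDUCE.  MAP is activated on an input
interrupt signal; depending on the mechanism and the privilege tables it reads
the global input queue and broadcasts (rule `mapRead`, with cloning for DI),
answers with the default value (rule `mapDefault`), or does nothing beyond
removing the signal (rule `mapSkip`).  REDUCE is activated on an output
interrupt signal; it forwards to the global output queue exactly the high
outputs of the high execution (index 0) and the low outputs of the low
execution (index 1), cleans the local output queue and wakes the requester. -/
inductive EMStep (M : Mech) (lvl : Chan → SecLevel) (vdef : Val) :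
    Agent → EMConf → EMConf → Prop
  | locStep {γ : EMConf} {i : ℕ} {l l' : LocalConf} :
      γ.locs[i]? = some l → LStep l l' →
      EMStep M lvl vdef (.loc i) γ { γ with locs := γ.locs.set i l' }
  | mapRead {γ : EMConf} {i : ℕ} {c : Chan} {l : LocalConf} {v : Val} {gin' : Queue} :
      γ.locs[i]? = some l → l.stt = .S → l.intr = some (.inSig c) →
      canAsk M lvl i c →
      dequeue γ.gin c = some (v, gin') →
      EMStep M lvl vdef (.mapA i c) γ
        { locs := broadcast lvl vdef c v
            (preClone M lvl i c (γ.locs.set i { l with intr := none })),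
          gin := gin', gout := γ.gout, gconsumed := γ.gconsumed ++ [⟨c, v⟩] }
  | mapDefault {γ : EMConf} {i : ℕ} {c : Chan} {l : LocalConf} :
      γ.locs[i]? = some l → l.stt = .S → l.intr = some (.inSig c) →
      defaultAnswer M lvl i c →
      EMStep M lvl vdef (.mapA i c) γ
        { γ with locs := γ.locs.set i (wakeNow (sendTo { l with intr := none } ⟨c, vdef⟩)) }
  | mapSkip {γ : EMConf} {i : ℕ} {c : Chan} {l : LocalConf} :
      γ.locs[i]? = some l → l.stt = .S → l.intr = some (.inSig c) →
      skipAnswer M lvl i c →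
      EMStep M lvl vdef (.mapA i c) γ
        { γ with locs := γ.locs.set i { l with intr := none } }
  | red {γ : EMConf} {i : ℕ} {c : Chan} {l : LocalConf} {v : Val} {out' : Queue} :
      γ.locs[i]? = some l → l.stt = .S → l.intr = some (.outSig c) →
      dequeue l.outq c = some (v, out') →
      EMStep M lvl vdef (.redA i c) γ
        { γ with
          locs := γ.locs.set i { l with stt := .E, intr := none, outq := out' },
          gout := γ.gout ++
            (if (i = 0 ∧ lvl c = SecLevel.H) ∨ (i = 1 ∧ lvl c = SecLevel.L)
             then [⟨c, v⟩] else []) }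

/-- A step of the enforcement mechanism, by any agent. -/
def EMStepRel (M : Mech) (lvl : Chan → SecLevel) (vdef : Val) :
    EMConf → EMConf → Prop :=
  fun γ γ' => ∃ a, EMStep M lvl vdef a γ γ'

/-- Initial configuration: the high execution π[0] and the low execution π[1],
global input queue `I`, empty global output queue. -/
def EMConf.init (p : Prog) (I : Queue) : EMConf :=
  ⟨[LocalConf.init p, LocalConf.init p], I, [], []⟩

/-- The enforcement mechanism has terminated: all local executions (as well as
the MAP and REDUCE programs, which are collapsed into atomic steps here) are
terminated and the global input queue has been consumed completely. -/
def EMConf.Terminal (γ : EMConf) : Prop :=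
  (∀ l ∈ γ.locs, l.prg = Prog.skip) ∧ γ.gin = []

/-- `EM(π)(I) ⇓ O`. -/
def EMBigStep (M : Mech) (lvl : Chan → SecLevel) (vdef : Val)
    (p : Prog) (I O : Queue) : Prop :=
  ∃ γ, Relation.ReflTransGen (EMStepRel M lvl vdef) (EMConf.init p I) γ ∧
    γ.Terminal ∧ γ.gout = O

/-- Reachable configurations of `EM(π)` on global input `I`. -/
def EMReach (M : Mech) (lvl : Chan → SecLevel) (vdef : Val)
    (p : Prog) (I : Queue) (γ : EMConf) : Prop :=
  Relation.ReflTransGen (EMStepRel M lvl vdef) (EMConf.init p I) γ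

/-- A configuration from which no step is possible. -/
def EMStuck (M : Mech) (lvl : Chan → SecLevel) (vdef : Val) (γ : EMConf) : Prop :=
  ∀ a γ', ¬ EMStep M lvl vdef a γ γ'

/-- There is no infinite run of the enforcement mechanism from `γ0`
(termination under every scheduling of the local executions). -/
def NoInfiniteRun (M : Mech) (lvl : Chan → SecLevel) (vdef : Val) (γ0 : EMConf) : Prop :=
  ¬ ∃ f : ℕ → EMConf, f 0 = γ0 ∧ ∀ n, EMStepRel M lvl vdef (f n) (f (n + 1))

end MapReduce

namespace MapReduce

/-- The consumption hypothesis of the running lemmas: the low execution π[1]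
has consumed the same low input items as in I, and the high execution π[0]
has consumed the high input and low input items as in I. -/
def ConsumesAsIn (lvl : Chan → SecLevel) (I : Queue) (γ : EMConf) : Prop :=
  restrictL lvl (γ.locAt 1).consumed SecLevel.L = restrictL lvl I SecLevel.L ∧
  restrictL lvl (γ.locAt 0).consumed SecLevel.L = restrictL lvl I SecLevel.L ∧
  restrictL lvl (γ.locAt 0).consumed SecLevel.H = restrictL lvl I SecLevel.H

/-! ### Auxiliary infrastructure for the proof -/

section Aux

/-- Output-free configurations. -/
structure TC where
  prg : Prog
  mem : Mem
  inq : Queue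

/-- Output-free small-step semantics. -/
inductive TStep : TC → TC → Prop
  | assign : TStep ⟨.assign x e, m, I⟩ ⟨.skip, Function.update m x (e.eval m), I⟩
  | seqStep : TStep ⟨p, m, I⟩ ⟨p', m', I'⟩ →
      TStep ⟨.seq p q, m, I⟩ ⟨.seq p' q, m', I'⟩
  | seqSkip : TStep ⟨.seq .skip q, m, I⟩ ⟨q, m, I⟩
  | iteT : e.eval m = .bool true → TStep ⟨.ite e p q, m, I⟩ ⟨p, m, I⟩
  | iteF : e.eval m = .bool false → TStep ⟨.ite e p q, m, I⟩ ⟨q, m, I⟩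
  | whileT : e.eval m = .bool true →
      TStep ⟨.while e p, m, I⟩ ⟨.seq p (.while e p), m, I⟩
  | whileF : e.eval m = .bool false → TStep ⟨.while e p, m, I⟩ ⟨.skip, m, I⟩
  | inp : dequeue I c = some (v, I') →
      TStep ⟨.input x c, m, I⟩ ⟨.skip, Function.update m x v, I'⟩
  | out : TStep ⟨.output e c, m, I⟩ ⟨.skip, m, I⟩

lemma tstep_skip_false {m : Mem} {I : Queue} {t : TC} (h : TStep ⟨.skip, m, I⟩ t) : False := by
  cases h

lemma tstep_det : ∀ {a b c : TC}, TStep a b → TStep a c → b = c := by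
  intro a b c h
  induction h generalizing c with
  | assign => intro h2; cases h2; rfl
  | seqStep h ih =>
    intro h2
    cases h2 with
    | seqStep h' => have := ih h'; injection this with h1 h2 h3; subst h1; subst h2; subst h3; rfl
    | seqSkip => exact absurd h tstep_skip_false
  | seqSkip => intro h2; cases h2 with
    | seqStep h' => exact absurd h' tstep_skip_false
    | seqSkip => rfl
  | iteT he => intro h2; cases h2 with
    | iteT _ => rfl
    | iteF he' => rw [he] at he'; cases he'
  | iteF he => intro h2; cases h2 with
    | iteT he' => rw [he] at he'; cases he'
    | iteF _ => rfl
  | whileT he => intro h2; cases h2 with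
    | whileT _ => rfl
    | whileF he' => rw [he] at he'; cases he'
  | whileF he => intro h2; cases h2 with
    | whileT he' => rw [he] at he'; cases he'
    | whileF _ => rfl
  | inp hd => intro h2; cases h2 with
    | inp hd' => rw [hd] at hd'; injection hd' with h'; injection h' with h1 h2; subst h1; subst h2; rfl
  | out => intro h2; cases h2; rfl

lemma pstep_tstep {a b : PConf} (h : PStep a b) :
    TStep ⟨a.prg, a.mem, a.inq⟩ ⟨b.prg, b.mem, b.inq⟩ := by
  induction h with
  | assign => exact .assign
  | seqStep _ ih => exact .seqStep ih
  | seqSkip => exact .seqSkip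
  | iteT he => exact .iteT he
  | iteF he => exact .iteF he
  | whileT he => exact .whileT he
  | whileF he => exact .whileF he
  | inp hd => exact .inp hd
  | out => exact .out

lemma bigstep_tstar {p : Prog} {I O : Queue} (h : BigStep p I O) :
    ∃ m, Relation.ReflTransGen TStep ⟨p, Mem.init, I⟩ ⟨.skip, m, []⟩ := by
  obtain ⟨m, hm⟩ := h
  exact ⟨m, Relation.ReflTransGen.lift (fun c : PConf => (⟨c.prg, c.mem, c.inq⟩ : TC))
    (fun a b hab => pstep_tstep hab) _ _ hm⟩

/-! #### dequeue / restriction lemmas -/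

lemma restrictC_nil (c : Chan) : restrictC [] c = [] := rfl

lemma restrictC_append (A B : Queue) (c : Chan) :
    restrictC (A ++ B) c = restrictC A c ++ restrictC B c :=
  List.filter_append ..

lemma restrictC_cons (v : Vec) (Q : Queue) (c : Chan) :
    restrictC (v :: Q) c = if v.ch = c then v :: restrictC Q c else restrictC Q c := by
  simp only [restrictC, List.filter_cons]
  by_cases h : v.ch = c <;> simp [h]

lemma restrictC_singleton_ne {v : Vec} {c : Chan} (h : v.ch ≠ c) :
    restrictC [v] c = [] := by simp [restrictC_cons, h, restrictC_nil]

lemma restrictC_singleton_eq {v : Vec} {c : Chan} (h : v.ch = c) :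
    restrictC [v] c = [v] := by simp [restrictC_cons, h, restrictC_nil]

lemma eq_nil_of_restrictC (Q : Queue) (h : ∀ c, restrictC Q c = []) : Q = [] := by
  cases Q with
  | nil => rfl
  | cons v t =>
    have := h v.ch
    rw [restrictC_cons, if_pos rfl] at this
    cases this

lemma dequeue_none_iff (Q : Queue) (c : Chan) :
    dequeue Q c = none ↔ restrictC Q c = [] := by
  induction Q with
  | nil => simp [dequeue, restrictC_nil]
  | cons v t ih =>
    rw [restrictC_cons, dequeue]
    by_cases h : v.ch = c
    · simp [h]
    · simp only [if_neg h]
      rw [Option.map_eq_none_iff, ih]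

lemma dequeue_some_spec {Q Q' : Queue} {c : Chan} {v : Val}
    (h : dequeue Q c = some (v, Q')) :
    restrictC Q c = ⟨c, v⟩ :: restrictC Q' c ∧
      ∀ c', c' ≠ c → restrictC Q c' = restrictC Q' c' := by
  induction Q generalizing Q' with
  | nil => cases h
  | cons w t ih =>
    rw [dequeue] at h
    by_cases hw : w.ch = c
    · rw [if_pos hw] at h
      injection h with h; injection h with h1 h2
      subst h1; subst h2
      constructor
      · rw [restrictC_cons, if_pos hw]
        cases w with
        | mk ch val => cases hw; rfl
      · intro c' hc'
        rw [restrictC_cons, if_neg]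
        rw [hw]; exact fun h => hc' h.symm
    · rw [if_neg hw] at h
      cases ht : dequeue t c with
      | none => rw [ht] at h; cases h
      | some pr =>
        rw [ht] at h
        cases pr with
        | mk v0 t0 =>
          simp only [Option.map_some] at h
          injection h with h; injection h with h1 h2
          subst h1
          obtain ⟨ha, hb⟩ := ih ht
          constructor
          · rw [← h2, restrictC_cons, if_neg hw, restrictC_cons, if_neg hw, ha]
          · intro c' hc'
            rw [← h2, restrictC_cons, restrictC_cons]
            by_cases hw' : w.ch = c'
            · rw [if_pos hw', if_pos hw', hb c' hc']
            · rw [if_neg hw', if_neg hw', hb c' hc']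

lemma dequeue_of_restrict {Q : Queue} {c : Chan} {v : Val} {t : Queue}
    (h : restrictC Q c = ⟨c, v⟩ :: t) :
    ∃ Q', dequeue Q c = some (v, Q') ∧ restrictC Q' c = t ∧
      ∀ c', c' ≠ c → restrictC Q c' = restrictC Q' c' := by
  cases hd : dequeue Q c with
  | none => rw [dequeue_none_iff] at hd; rw [hd] at h; cases h
  | some pr =>
    cases pr with
    | mk v0 Q0 =>
      obtain ⟨ha, hb⟩ := dequeue_some_spec hd
      rw [ha] at h
      injection h with h1 h2
      injection h1 with _ hv
      subst hv
      exact ⟨Q0, rfl, h2.symm ▸ rfl, hb⟩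

lemma dequeue_append_some {I I' F : Queue} {c : Chan} {v : Val}
    (h : dequeue I c = some (v, I')) : dequeue (I ++ F) c = some (v, I' ++ F) := by
  induction I generalizing I' with
  | nil => cases h
  | cons w t ih =>
    rw [dequeue] at h
    rw [List.cons_append, dequeue]
    by_cases hw : w.ch = c
    · rw [if_pos hw] at h ⊢
      injection h with h; injection h with h1 h2
      subst h1; subst h2; rfl
    · rw [if_neg hw] at h ⊢
      cases ht : dequeue t c with
      | none => rw [ht] at h; cases h
      | some pr =>
        rw [ht] at h
        cases pr with
        | mk v0 t0 =>
          simp only [Option.map_some] at h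
          injection h with h; injection h with h1 h2
          subst h1
          rw [ih ht]
          simp [← h2]

lemma dequeue_append_none {I : Queue} {w : Vec} {c : Chan}
    (h : dequeue I c = none) (hw : w.ch ≠ c) : dequeue (I ++ [w]) c = none := by
  rw [dequeue_none_iff] at h ⊢
  rw [restrictC_append, h, restrictC_singleton_ne hw]; rfl

lemma dequeue_append_self (I : Queue) (c : Chan) (v : Val) :
    (dequeue (I ++ [⟨c, v⟩]) c).isSome := by
  cases hd : dequeue (I ++ [⟨c, v⟩]) c with
  | none =>
    rw [dequeue_none_iff, restrictC_append, restrictC_singleton_eq rfl] at hd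
    simp at hd
  | some pr => rfl

lemma restrictC_restrictL (lvl : Chan → SecLevel) (Q : Queue) (c : Chan) :
    restrictC (restrictL lvl Q (lvl c)) c = restrictC Q c := by
  induction Q with
  | nil => rfl
  | cons v t ih =>
    by_cases h : v.ch = c
    · have hl : lvl v.ch = lvl c := by rw [h]
      simp only [restrictL, List.filter_cons, hl]
      simp only [decide_true, if_true]
      rw [restrictC_cons, restrictC_cons, if_pos h, if_pos h]
      exact congrArg (List.cons _) ih
    · simp only [restrictL, List.filter_cons]
      by_cases hl : lvl v.ch = lvl c
      · simp only [hl, decide_true, if_true]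
        rw [restrictC_cons, restrictC_cons, if_neg h, if_neg h]
        exact ih
      · simp only [hl, decide_false, if_false]
        rw [restrictC_cons (Q := t), if_neg h]
        exact ih

lemma restrictC_eq_of_restrictL {lvl : Chan → SecLevel} {A B : Queue} {s : SecLevel}
    (h : restrictL lvl A s = restrictL lvl B s) {c : Chan} (hc : lvl c = s) :
    restrictC A c = restrictC B c := by
  subst hc
  rw [← restrictC_restrictL lvl A c, ← restrictC_restrictL lvl B c, h]

lemma restrictC_map {f : Vec → Vec} (hf : ∀ v, (f v).ch = v.ch) (Q : Queue) (c : Chan) :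
    restrictC (Q.map f) c = (restrictC Q c).map f := by
  induction Q with
  | nil => rfl
  | cons v t ih =>
    rw [List.map_cons, restrictC_cons, restrictC_cons, hf]
    by_cases h : v.ch = c
    · rw [if_pos h, if_pos h, List.map_cons, ih]
    · rw [if_neg h, if_neg h, ih]

lemma mem_restrictC {v : Vec} {Q : Queue} {c : Chan} (h : v ∈ restrictC Q c) :
    v ∈ Q ∧ v.ch = c := by
  have := List.mem_filter.mp h
  exact ⟨this.1, by simpa using this.2⟩

lemma const_prefix {A B : List Vec} {a : Vec} (hA : ∀ x ∈ A, x = a) (hB : ∀ x ∈ B, x = a)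
    (hlen : A.length ≤ B.length) : A <+: B := by
  rw [List.eq_replicate_of_mem hA, List.eq_replicate_of_mem hB]
  rw [show B.length = A.length + (B.length - A.length) from (Nat.add_sub_cancel' hlen).symm]
  rw [List.replicate_add]
  exact ⟨_, rfl⟩

/-! #### simulation up to channel-wise prefix -/

/-- `Rel lvl J K`: channel-wise, `J` is a prefix of `K`, with equality on low channels. -/
def Rel (lvl : Chan → SecLevel) (J K : Queue) : Prop :=
  ∀ c, restrictC J c <+: restrictC K c ∧
    (lvl c = SecLevel.L → restrictC J c = restrictC K c)

lemma rel_dequeue {lvl : Chan → SecLevel} {J K J' : Queue} {c : Chan} {v : Val}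
    (hrel : Rel lvl J K) (h : dequeue J c = some (v, J')) :
    ∃ K', dequeue K c = some (v, K') ∧ Rel lvl J' K' := by
  obtain ⟨hJ, hJne⟩ := dequeue_some_spec h
  obtain ⟨hpre, hLeq⟩ := hrel c
  rw [hJ] at hpre
  obtain ⟨tK, htK⟩ : ∃ t, restrictC K c = ⟨c, v⟩ :: t := by
    obtain ⟨s, hs⟩ := hpre
    exact ⟨restrictC J' c ++ s, by rw [← hs]; simp⟩
  obtain ⟨K', hKd, hK'c, hKne⟩ := dequeue_of_restrict htK
  refine ⟨K', hKd, fun c' => ?_⟩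
  by_cases hc : c' = c
  · subst hc
    constructor
    · rw [hK'c]
      obtain ⟨s, hs⟩ := hpre
      rw [htK] at hs
      injection hs with _ hs
      exact ⟨s, hs⟩
    · intro hL
      have := hLeq hL
      rw [hJ, htK] at this
      injection this with _ this
      rw [hK'c, this]
  · obtain ⟨hpre', hLeq'⟩ := hrel c'
    rw [hJne c' hc, hKne c' hc] at hpre' hLeq'
    exact ⟨hpre', hLeq'⟩

lemma tstep_sim {lvl : Chan → SecLevel} {s t : TC} {K : Queue}
    (h : TStep s t) (hrel : Rel lvl s.inq K) :
    ∃ K', TStep ⟨s.prg, s.mem, K⟩ ⟨t.prg, t.mem, K'⟩ ∧ Rel lvl t.inq K' := by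
  induction h generalizing K with
  | assign => exact ⟨K, .assign, hrel⟩
  | seqStep h ih =>
    obtain ⟨K', hstep, hrel'⟩ := ih hrel
    exact ⟨K', .seqStep hstep, hrel'⟩
  | seqSkip => exact ⟨K, .seqSkip, hrel⟩
  | iteT he => exact ⟨K, .iteT he, hrel⟩
  | iteF he => exact ⟨K, .iteF he, hrel⟩
  | whileT he => exact ⟨K, .whileT he, hrel⟩
  | whileF he => exact ⟨K, .whileF he, hrel⟩
  | inp hd =>
    obtain ⟨K', hKd, hrel'⟩ := rel_dequeue hrel hd
    exact ⟨K', .inp hKd, hrel'⟩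
  | out => exact ⟨K, .out, hrel⟩

lemma tstar_sim {lvl : Chan → SecLevel} {s t : TC} {K : Queue}
    (h : Relation.ReflTransGen TStep s t) (hrel : Rel lvl s.inq K) :
    ∃ K', Relation.ReflTransGen TStep ⟨s.prg, s.mem, K⟩ ⟨t.prg, t.mem, K'⟩ ∧
      Rel lvl t.inq K' := by
  induction h with
  | refl => exact ⟨K, .refl, hrel⟩
  | tail _ h ih =>
    obtain ⟨K', hstar, hrel'⟩ := ih
    obtain ⟨K'', hstep, hrel''⟩ := tstep_sim h hrel'
    exact ⟨K'', hstar.tail hstep, hrel''⟩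

lemma tstar_det_chain {a b z : TC}
    (hab : Relation.ReflTransGen TStep a b) (haz : Relation.ReflTransGen TStep a z)
    (hz : ∀ t, ¬ TStep z t) : Relation.ReflTransGen TStep b z := by
  induction hab with
  | refl => exact haz
  | tail hstar hstep ih =>
    cases (Relation.ReflTransGen.cases_head ih) with
    | inl h => subst h; exact absurd hstep (hz _)
    | inr h =>
      obtain ⟨c, hc, hcz⟩ := h
      rw [tstep_det hstep hc]
      exact hcz

/-! #### relating local steps and output-free steps -/

/-- The head-input channel of a local configuration. -/
def headInChan (q : Prog) : Option Chan := q.headInput.map Prod.snd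

lemma tstep_headInput {s t : TC} {x : Var} {c : Chan}
    (h : TStep s t) (hhd : s.prg.headInput = some (x, c)) :
    (dequeue s.inq c).isSome := by
  induction h with
  | seqStep h ih => exact ih hhd
  | inp hd =>
    rw [Prog.headInput] at hhd
    injection hhd with hhd
    injection hhd with _ hc
    subst hc
    rw [hd]; rfl
  | seqSkip => simp [Prog.headInput] at hhd
  | assign => cases hhd
  | iteT _ => cases hhd
  | iteF _ => cases hhd
  | whileT _ => cases hhd
  | whileF _ => cases hhd
  | out => cases hhd

lemma tstep_exists_lstep {s t : TC}
    (h : TStep s t) (oq r cs : Queue) :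
    ∃ l', LStep ⟨.E, none, s.prg, s.mem, s.inq, oq, r, cs⟩ l' := by
  induction h generalizing oq r cs with
  | assign => exact ⟨_, .assign⟩
  | @seqStep p m I p' m' I' qq h ih =>
    obtain ⟨⟨st, sg, p2, m2, I2, O2, r2, cs2⟩, hl⟩ := ih oq r cs
    exact ⟨_, .seqStep hl⟩
  | seqSkip => exact ⟨_, .seqSkip⟩
  | iteT he => exact ⟨_, .iteT he⟩
  | iteF he => exact ⟨_, .iteF he⟩
  | whileT he => exact ⟨_, .whileT he⟩
  | whileF he => exact ⟨_, .whileF he⟩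
  | inp hd => exact ⟨_, .inp1 hd⟩
  | out => exact ⟨_, .out⟩

/-- Characterization of local steps. -/
lemma lstep_char {l l' : LocalConf} (h : LStep l l') :
    l.stt = .E ∧ l.intr = none ∧
    l'.received = l.received ∧
    (∀ c, restrictC l'.consumed c ++ restrictC l'.inq c
        = restrictC l.consumed c ++ restrictC l.inq c) ∧
    ((∀ F, TStep ⟨l.prg, l.mem, l.inq ++ F⟩ ⟨l'.prg, l'.mem, l'.inq ++ F⟩) ∨
      (l'.prg = l.prg ∧ l'.mem = l.mem ∧ l'.inq = l.inq ∧ l'.consumed = l.consumed ∧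
       l'.stt = .S ∧ ∃ c, l'.intr = some (.inSig c))) ∧
    ((l'.stt = .E ∧ l'.intr = none) ∨
     (l'.stt = .S ∧
       ((∃ c, l'.intr = some (.inSig c) ∧ headInChan l'.prg = some c ∧
           dequeue l'.inq c = none) ∨
        (∃ c, l'.intr = some (.outSig c) ∧ headInChan l'.prg = none ∧
           (dequeue l'.outq c).isSome)))) := by
  induction h with
  | assign =>
    exact ⟨rfl, rfl, rfl, fun c => rfl, .inl fun F => .assign, .inl ⟨rfl, rfl⟩⟩
  | @seqStep p m I O r cs st sg p' m' I' O' r' cs' q h ih =>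
    obtain ⟨-, -, hrec, hci, hdich, hstate⟩ := ih
    refine ⟨rfl, rfl, hrec, hci, ?_, ?_⟩
    · cases hdich with
      | inl ht => exact .inl fun F => .seqStep (ht F)
      | inr hs =>
        obtain ⟨h1, h2, h3, h4, h5, h6⟩ := hs
        exact .inr ⟨by simp only at h1 ⊢; rw [h1], h2, h3, h4, h5, h6⟩
    · cases hstate with
      | inl h => exact .inl h
      | inr h =>
        refine .inr ⟨h.1, ?_⟩
        cases h.2 with
        | inl h2 =>
          obtain ⟨c, hc1, hc2, hc3⟩ := h2
          exact .inl ⟨c, hc1, hc2, hc3⟩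
        | inr h2 =>
          obtain ⟨c, hc1, hc2, hc3⟩ := h2
          exact .inr ⟨c, hc1, hc2, hc3⟩
  | seqSkip =>
    exact ⟨rfl, rfl, rfl, fun c => rfl, .inl fun F => .seqSkip, .inl ⟨rfl, rfl⟩⟩
  | iteT he =>
    exact ⟨rfl, rfl, rfl, fun c => rfl, .inl fun F => .iteT he, .inl ⟨rfl, rfl⟩⟩
  | iteF he =>
    exact ⟨rfl, rfl, rfl, fun c => rfl, .inl fun F => .iteF he, .inl ⟨rfl, rfl⟩⟩
  | whileT he =>
    exact ⟨rfl, rfl, rfl, fun c => rfl, .inl fun F => .whileT he, .inl ⟨rfl, rfl⟩⟩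
  | whileF he =>
    exact ⟨rfl, rfl, rfl, fun c => rfl, .inl fun F => .whileF he, .inl ⟨rfl, rfl⟩⟩
  | @inp1 I c v I' x m O r cs hd =>
    refine ⟨rfl, rfl, rfl, ?_, .inl fun F => .inp (dequeue_append_some hd), .inl ⟨rfl, rfl⟩⟩
    intro c0
    obtain ⟨ha, hb⟩ := dequeue_some_spec hd
    by_cases hc : c0 = c
    · subst hc
      rw [restrictC_append, restrictC_singleton_eq rfl, ha]
      simp
    · rw [restrictC_append, restrictC_singleton_ne (by simpa using Ne.symm hc),
        hb c0 hc]
      simp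
  | @inp2 I c x m O r cs hd =>
    refine ⟨rfl, rfl, rfl, fun c => rfl, .inr ⟨rfl, rfl, rfl, rfl, rfl, c, rfl⟩,
      .inr ⟨rfl, .inl ⟨c, rfl, rfl, hd⟩⟩⟩
  | @out e c m I O r cs =>
    exact ⟨rfl, rfl, rfl, fun c => rfl, .inl fun F => .out,
      .inr ⟨rfl, .inr ⟨c, rfl, rfl, dequeue_append_self O c (e.eval m)⟩⟩⟩

/-! #### no infinite runs -/

lemma no_strict_descent (f : ℕ → ℕ) (h : ∀ n, f (n + 1) < f n) : False := by
  have key : ∀ n, f n + n ≤ f 0 := by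
    intro n
    induction n with
    | zero => simp
    | succ k ih => have := h k; omega
  have := key (f 0 + 1)
  omega

lemma stutter_least {α : Type*} {R : α → α → Prop} {g : ℕ → α}
    (hst : ∀ n, R (g n) (g (n + 1)) ∨ g (n + 1) = g n)
    (hex : ∃ m, R (g m) (g (m + 1))) :
    ∃ m, R (g m) (g (m + 1)) ∧ g m = g 0 := by
  classical
  refine ⟨Nat.find hex, Nat.find_spec hex, ?_⟩
  have key : ∀ k, k ≤ Nat.find hex → g k = g 0 := by
    intro k
    induction k with
    | zero => intro _; rfl
    | succ j ih =>
      intro hk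
      have hj : g (j + 1) = g j := by
        rcases hst j with h | h
        · exact absurd h (Nat.find_min hex (by omega))
        · exact h
      rw [hj]
      exact ih (by omega)
  exact key _ le_rfl

lemma noinf {α : Type*} {R : α → α → Prop} (hdet : ∀ a b c, R a b → R a c → b = c)
    {z : α} (hz : ∀ t, ¬ R z t) :
    ∀ {a : α}, Relation.ReflTransGen R a z → ∀ g : ℕ → α, g 0 = a →
      (∀ n, R (g n) (g (n + 1)) ∨ g (n + 1) = g n) →
      (∀ n, ∃ m, n ≤ m ∧ R (g m) (g (m + 1))) → False := by
  intro a h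
  induction h using Relation.ReflTransGen.head_induction_on with
  | refl =>
    intro g hg0 hst hinf
    obtain ⟨m, hm, hm0⟩ := stutter_least hst ⟨(hinf 0).choose, (hinf 0).choose_spec.2⟩
    rw [hm0, hg0] at hm
    exact hz _ hm
  | @head a c hac hcz ih =>
    intro g hg0 hst hinf
    obtain ⟨m, hm, hm0⟩ := stutter_least hst ⟨(hinf 0).choose, (hinf 0).choose_spec.2⟩
    rw [hm0, hg0] at hm
    have hgc : g (m + 1) = c := hdet _ _ _ hm hac
    refine ih (fun k => g (k + (m + 1))) (by simpa using hgc) (fun n => by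
      have := hst (n + (m + 1))
      simpa [Nat.add_right_comm] using this) ?_
    intro n
    obtain ⟨m', hm', hR⟩ := hinf (n + (m + 1))
    refine ⟨m' - (m + 1), by omega, ?_⟩
    show R (g (m' - (m + 1) + (m + 1))) (g (m' - (m + 1) + 1 + (m + 1)))
    have h1 : m' - (m + 1) + (m + 1) = m' := by omega
    have h2 : m' - (m + 1) + 1 + (m + 1) = m' + 1 := by omega
    rw [h1, h2]
    exact hR

/-! #### the invariant of the RI enforcement mechanism -/

/-- Replace the value of high vectors by the default value. -/
def dmap (lvl : Chan → SecLevel) (vdef : Val) (v : Vec) : Vec :=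
  if lvl v.ch = SecLevel.H then ⟨v.ch, vdef⟩ else v

lemma dmap_ch (lvl : Chan → SecLevel) (vdef : Val) (v : Vec) :
    (dmap lvl vdef v).ch = v.ch := by
  unfold dmap; split <;> rfl

/-- Invariant of one local execution. -/
def LInv (p : Prog) (l : LocalConf) : Prop :=
  (∀ F, Relation.ReflTransGen TStep ⟨p, Mem.init, l.received ++ F⟩ ⟨l.prg, l.mem, l.inq ++ F⟩) ∧
  (∀ c, restrictC l.received c = restrictC l.consumed c ++ restrictC l.inq c) ∧
  (l.stt = .E → l.intr = none) ∧
  (∀ c, l.intr = some (.inSig c) →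
    l.stt = .S ∧ headInChan l.prg = some c ∧ dequeue l.inq c = none) ∧
  (l.stt = .S → l.intr = none → ∃ c, headInChan l.prg = some c ∧ dequeue l.inq c = none) ∧
  (∀ c, l.intr = some (.outSig c) →
    l.stt = .S ∧ headInChan l.prg = none ∧ (dequeue l.outq c).isSome)

/-- The global invariant. -/
def Inv (p : Prog) (lvl : Chan → SecLevel) (vdef : Val) (I : Queue) (γ : EMConf) : Prop :=
  ∃ l0 l1, γ.locs = [l0, l1] ∧
    (∀ c, restrictC γ.gconsumed c ++ restrictC γ.gin c = restrictC I c) ∧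
    l0.received = γ.gconsumed ∧
    l1.received = γ.gconsumed.map (dmap lvl vdef) ∧
    LInv p l0 ∧ LInv p l1

lemma linv_init (p : Prog) : LInv p (LocalConf.init p) := by
  refine ⟨fun F => ?_, fun c => ?_, fun _ => rfl, fun c h => (by cases h),
    fun h _ => LState.noConfusion h, fun c h => (by cases h)⟩
  · exact .refl
  · show restrictC [] c = restrictC [] c ++ restrictC [] c
    rfl

lemma inv_init (p : Prog) (lvl : Chan → SecLevel) (vdef : Val) (I : Queue) :
    Inv p lvl vdef I (EMConf.init p I) :=
  ⟨LocalConf.init p, LocalConf.init p, rfl, fun c => rfl, rfl, rfl, linv_init p, linv_init p⟩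

lemma linv_lstep {p : Prog} {l l' : LocalConf} (hL : LInv p l) (h : LStep l l') :
    LInv p l' := by
  obtain ⟨hE, hnone, hrec, hci, hdich, hstate⟩ := lstep_char h
  obtain ⟨ha, hb, hc, hd, he, hf⟩ := hL
  refine ⟨fun F => ?_, fun c => ?_, ?_, ?_, ?_, ?_⟩
  · rw [hrec]
    cases hdich with
    | inl ht => exact (ha F).tail (ht F)
    | inr hs => rw [hs.1, hs.2.1, hs.2.2.1]; exact ha F
  · rw [hrec, hci c]; exact hb c
  · intro hx
    rcases hstate with ⟨h1, h2⟩ | ⟨h1, -⟩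
    · exact h2
    · rw [h1] at hx; exact LState.noConfusion hx
  · intro c1 hx
    rcases hstate with ⟨h1, h2⟩ | ⟨h1, ⟨c0, h2, h3, h4⟩ | ⟨c0, h2, h3, h4⟩⟩
    · rw [h2] at hx; exact nomatch hx
    · rw [h2] at hx; injection hx with hx; injection hx with hx; subst hx
      exact ⟨h1, h3, h4⟩
    · rw [h2] at hx; injection hx with hx; exact Sig.noConfusion hx
  · intro hS hn
    rcases hstate with ⟨h1, h2⟩ | ⟨h1, ⟨c0, h2, h3, h4⟩ | ⟨c0, h2, h3, h4⟩⟩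
    · rw [h1] at hS; exact LState.noConfusion hS
    · rw [h2] at hn; exact nomatch hn
    · rw [h2] at hn; exact nomatch hn
  · intro c1 hx
    rcases hstate with ⟨h1, h2⟩ | ⟨h1, ⟨c0, h2, h3, h4⟩ | ⟨c0, h2, h3, h4⟩⟩
    · rw [h2] at hx; exact nomatch hx
    · rw [h2] at hx; injection hx with hx; exact Sig.noConfusion hx
    · rw [h2] at hx; injection hx with hx; injection hx with hx; subst hx
      exact ⟨h1, h3, h4⟩

lemma linv_designal {p : Prog} {l : LocalConf} {c : Chan} (hL : LInv p l)
    (hI : l.intr = some (.inSig c)) : LInv p { l with intr := none } := by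
  obtain ⟨ha, hb, hc, hd, he, hf⟩ := hL
  obtain ⟨hS, hhd, hdq⟩ := hd c hI
  exact ⟨fun F => ha F, fun c => hb c, fun h => rfl, fun c0 h => (by cases h),
    fun _ _ => ⟨c, hhd, hdq⟩, fun c0 h => (by cases h)⟩

lemma sendTo_fields (l : LocalConf) (w : Vec) :
    (sendTo l w).stt = l.stt ∧ (sendTo l w).intr = l.intr ∧ (sendTo l w).prg = l.prg ∧
    (sendTo l w).mem = l.mem ∧ (sendTo l w).inq = l.inq ++ [w] ∧
    (sendTo l w).outq = l.outq ∧ (sendTo l w).received = l.received ++ [w] ∧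
    (sendTo l w).consumed = l.consumed :=
  ⟨rfl, rfl, rfl, rfl, rfl, rfl, rfl, rfl⟩

lemma linv_sendwake {p : Prog} {l : LocalConf} {c : Chan} {x : Val} (hL : LInv p l) :
    LInv p (wakeReadyOn c (sendTo l ⟨c, x⟩)) ∧
    (wakeReadyOn c (sendTo l ⟨c, x⟩)).received = l.received ++ [⟨c, x⟩] := by
  obtain ⟨ha, hb, hc, hd, he, hf⟩ := hL
  have ha' : ∀ F, Relation.ReflTransGen TStep ⟨p, Mem.init, (l.received ++ [⟨c, x⟩]) ++ F⟩
      ⟨l.prg, l.mem, (l.inq ++ [⟨c, x⟩]) ++ F⟩ := by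
    intro F
    rw [List.append_assoc, List.append_assoc]
    exact ha _
  have hb' : ∀ c0, restrictC (l.received ++ [⟨c, x⟩]) c0 =
      restrictC l.consumed c0 ++ restrictC (l.inq ++ [⟨c, x⟩]) c0 := by
    intro c0
    rw [restrictC_append, restrictC_append, hb c0, List.append_assoc]
  unfold wakeReadyOn
  split
  · -- woken
    refine ⟨⟨fun F => ha' F, fun c0 => hb' c0, fun _ => rfl, fun c0 h => (by cases h),
      fun h _ => LState.noConfusion h, fun c0 h => (by cases h)⟩, rfl⟩
  · -- not woken
    rename_i hnr
    refine ⟨⟨fun F => ha' F, fun c0 => hb' c0, hc, ?_, ?_, ?_⟩, rfl⟩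
    · intro c0 h0
      obtain ⟨hS, hhd, hdq⟩ := hd c0 h0
      refine ⟨hS, hhd, ?_⟩
      by_cases hcc : c0 = c
      · subst hcc
        exfalso
        apply hnr
        refine ⟨?_, ?_⟩
        · show LocalConf.waitChanI _ = some c0
          unfold LocalConf.waitChanI
          rw [if_pos (by exact hS)]
          exact hhd
        · show (dequeue (l.inq ++ [(⟨c0, x⟩ : Vec)]) c0).isSome = true
          exact dequeue_append_self l.inq c0 x
      · exact dequeue_append_none hdq (fun h => hcc (by simpa using h.symm))
    · intro hS hn
      obtain ⟨c0, hhd, hdq⟩ := he hS hn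
      refine ⟨c0, hhd, ?_⟩
      by_cases hcc : c0 = c
      · subst hcc
        exfalso
        apply hnr
        refine ⟨?_, dequeue_append_self l.inq c0 x⟩
        show LocalConf.waitChanI _ = some c0
        unfold LocalConf.waitChanI
        rw [if_pos (by exact hS)]
        exact hhd
      · exact dequeue_append_none hdq (fun h => hcc (by simpa using h.symm))
    · intro c0 h0
      obtain ⟨hS, hhd, hdq⟩ := hf c0 h0
      exact ⟨hS, hhd, hdq⟩

lemma two_index {l0 l1 l : LocalConf} {i : ℕ} (h : ([l0, l1] : List LocalConf)[i]? = some l) :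
    (i = 0 ∧ l = l0) ∨ (i = 1 ∧ l = l1) := by
  match i with
  | 0 => left; exact ⟨rfl, by simpa using h.symm⟩
  | 1 => right; exact ⟨rfl, by simpa using h.symm⟩
  | (n + 2) => simp at h

/-- The value broadcast to the low execution. -/
def dval (lvl : Chan → SecLevel) (vdef : Val) (c : Chan) (v : Val) : Val :=
  if lvl c = SecLevel.L then v else vdef

lemma dmap_mk (lvl : Chan → SecLevel) (vdef : Val) (c : Chan) (v : Val) :
    dmap lvl vdef ⟨c, v⟩ = ⟨c, dval lvl vdef c v⟩ := by
  cases hlc : lvl c <;> simp [dmap, dval, hlc]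

lemma broadcast_pair (lvl : Chan → SecLevel) (vdef : Val) (c : Chan) (v : Val)
    (a b : LocalConf) :
    broadcast lvl vdef c v [a, b] =
      [wakeReadyOn c (sendTo a ⟨c, v⟩),
       wakeReadyOn c (sendTo b ⟨c, dval lvl vdef c v⟩)] := by
  unfold broadcast dval
  by_cases h : lvl c = SecLevel.L <;>
    simp [List.mapIdx, List.mapIdx.go, h]

lemma inv_step {p : Prog} {lvl : Chan → SecLevel} {vdef : Val} {I : Queue}
    {a : Agent} {γ γ' : EMConf} (hInv : Inv p lvl vdef I γ)
    (h : EMStep .RI lvl vdef a γ γ') : Inv p lvl vdef I γ' := by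
  obtain ⟨l0, l1, hlocs, hg, hr0, hr1, hL0, hL1⟩ := hInv
  cases h with
  | @locStep _ i l l' hl hstep =>
    rw [hlocs] at hl
    obtain ⟨hE, hnone, hrec, -⟩ := lstep_char hstep
    rcases two_index hl with ⟨hi, hll⟩ | ⟨hi, hll⟩ <;> subst hi <;> subst hll
    · exact ⟨l', l1, by rw [hlocs]; rfl, hg, by rw [hrec]; exact hr0, hr1,
        linv_lstep hL0 hstep, hL1⟩
    · exact ⟨l0, l', by rw [hlocs]; rfl, hg, hr0, by rw [hrec]; exact hr1, hL0,
        linv_lstep hL1 hstep⟩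
  | @mapRead _ i c l v gin' hl hS hI hask hd =>
    rw [hlocs] at hl
    obtain ⟨hgc, hgne⟩ := dequeue_some_spec hd
    have hg' : ∀ c0, restrictC (γ.gconsumed ++ [⟨c, v⟩]) c0 ++ restrictC gin' c0
        = restrictC I c0 := by
      intro c0
      by_cases hcc : c0 = c
      · subst hcc
        rw [restrictC_append, restrictC_singleton_eq rfl, List.append_assoc]
        rw [← hg c0, hgc]
        rfl
      · rw [restrictC_append, restrictC_singleton_ne (fun hh => hcc (by simpa using hh.symm)),
          List.append_nil, ← hgne c0 hcc]
        exact hg c0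
    rcases two_index hl with ⟨hi, hll⟩ | ⟨hi, hll⟩ <;> subst hi <;> subst hll
    · have hset : preClone Mech.RI lvl 0 c (γ.locs.set 0 { l with intr := none })
          = [{ l with intr := none }, l1] := by
        rw [hlocs]; simp [preClone]
      obtain ⟨hw0, hw0r⟩ := linv_sendwake (l := { l with intr := none }) (c := c) (x := v)
        (linv_designal hL0 hI)
      obtain ⟨hw1, hw1r⟩ := linv_sendwake (l := l1) (c := c) (x := dval lvl vdef c v) hL1
      refine ⟨wakeReadyOn c (sendTo { l with intr := none } ⟨c, v⟩),
        wakeReadyOn c (sendTo l1 ⟨c, dval lvl vdef c v⟩), ?_, hg', ?_, ?_, hw0, hw1⟩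
      · show broadcast lvl vdef c v _ = _
        rw [hset, broadcast_pair]
      · rw [hw0r]
        show ({ l with intr := none } : LocalConf).received ++ _ = _
        rw [show ({ l with intr := none } : LocalConf).received = l.received from rfl, hr0]
      · rw [hw1r, hr1, ← dmap_mk]
        simp
    · have hset : preClone Mech.RI lvl 1 c (γ.locs.set 1 { l with intr := none })
          = [l0, { l with intr := none }] := by
        rw [hlocs]; simp [preClone]
      obtain ⟨hw0, hw0r⟩ := linv_sendwake (l := l0) (c := c) (x := v) hL0
      obtain ⟨hw1, hw1r⟩ := linv_sendwake (l := { l with intr := none })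
        (c := c) (x := dval lvl vdef c v) (linv_designal hL1 hI)
      refine ⟨wakeReadyOn c (sendTo l0 ⟨c, v⟩),
        wakeReadyOn c (sendTo { l with intr := none } ⟨c, dval lvl vdef c v⟩),
        ?_, hg', ?_, ?_, hw0, hw1⟩
      · show broadcast lvl vdef c v _ = _
        rw [hset, broadcast_pair]
      · rw [hw0r, hr0]
      · rw [hw1r]
        show ({ l with intr := none } : LocalConf).received ++ _ = _
        rw [show ({ l with intr := none } : LocalConf).received = l.received from rfl, hr1,
          ← dmap_mk]
        simp
  | mapDefault hl hS hI hda => exact hda.elim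
  | @mapSkip _ i c l hl hS hI hskip =>
    rw [hlocs] at hl
    rcases two_index hl with ⟨hi, hll⟩ | ⟨hi, hll⟩ <;> subst hi <;> subst hll
    · exact ⟨{ l with intr := none }, l1, by rw [hlocs]; rfl, hg, hr0, hr1,
        linv_designal hL0 hI, hL1⟩
    · exact ⟨l0, { l with intr := none }, by rw [hlocs]; rfl, hg, hr0, hr1, hL0,
        linv_designal hL1 hI⟩
  | @red _ i c l v out' hl hS hI hd =>
    rw [hlocs] at hl
    have hred : ∀ l2 : LocalConf, LInv p l2 →
        LInv p { l2 with stt := .E, intr := none, outq := out' } := by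
      intro l2 ⟨ha, hb, hc, hd', he, hf⟩
      exact ⟨fun F => ha F, fun c0 => hb c0, fun _ => rfl, fun c0 hx => (by cases hx),
        fun hx _ => absurd hx (by simp),
        fun c0 hx => (by cases hx)⟩
    rcases two_index hl with ⟨hi, hll⟩ | ⟨hi, hll⟩ <;> subst hi <;> subst hll
    · exact ⟨{ l with stt := .E, intr := none, outq := out' }, l1, by rw [hlocs]; rfl,
        hg, hr0, hr1, hred l hL0, hL1⟩
    · exact ⟨l0, { l with stt := .E, intr := none, outq := out' }, by rw [hlocs]; rfl,
        hg, hr0, hr1, hL0, hred l hL1⟩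

lemma reach_inv {p : Prog} {lvl : Chan → SecLevel} {vdef : Val} {I : Queue} {γ : EMConf}
    (h : EMReach Mech.RI lvl vdef p I γ) : Inv p lvl vdef I γ := by
  induction h with
  | refl => exact inv_init p lvl vdef I
  | tail _ hstep ih =>
    obtain ⟨a, ha⟩ := hstep
    exact inv_step ih ha

lemma map_id_of {f : Vec → Vec} {l : List Vec} (h : ∀ x ∈ l, f x = x) : l.map f = l := by
  induction l with
  | nil => rfl
  | cons a t ih =>
    rw [List.map_cons, h a (by simp), ih (fun x hx => h x (by simp [hx]))]

/-- The central consequence of `ConsumesAsIn` together with the invariant. -/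
lemma core {p : Prog} {lvl : Chan → SecLevel} {vdef : Val} {I O : Queue}
    (hsec : RI lvl p) (hrun : BigStep p I O) {γ : EMConf}
    (hInv : Inv p lvl vdef I γ) (hcons : ConsumesAsIn lvl I γ) :
    ∃ l0 l1, γ.locs = [l0, l1] ∧ γ.gin = [] ∧
      (∀ c, restrictC γ.gconsumed c = restrictC I c) ∧
      (∃ mz Kz, Relation.ReflTransGen TStep ⟨l0.prg, l0.mem, l0.inq⟩ ⟨.skip, mz, Kz⟩) ∧
      (∃ mz Kz, Relation.ReflTransGen TStep ⟨l1.prg, l1.mem, l1.inq⟩ ⟨.skip, mz, Kz⟩) := by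
  obtain ⟨l0, l1, hlocs, hg, hr0, hr1, hL0, hL1⟩ := hInv
  have hat0 : γ.locAt 0 = l0 := by rw [EMConf.locAt, hlocs]; rfl
  have hat1 : γ.locAt 1 = l1 := by rw [EMConf.locAt, hlocs]; rfl
  obtain ⟨hc1L, hc0L, hc0H⟩ := hcons
  rw [hat1] at hc1L
  rw [hat0] at hc0L hc0H
  -- the high execution has consumed exactly `I`, channel-wise
  have hcons0 : ∀ c, restrictC l0.consumed c = restrictC I c := by
    intro c
    cases hlc : lvl c with
    | H => exact restrictC_eq_of_restrictL hc0H hlc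
    | L => exact restrictC_eq_of_restrictL hc0L hlc
  have key : ∀ c, restrictC l0.inq c = [] ∧ restrictC γ.gin c = [] ∧
      restrictC γ.gconsumed c = restrictC I c := by
    intro c
    have h1 : restrictC γ.gconsumed c = restrictC I c ++ restrictC l0.inq c := by
      rw [← hr0, hL0.2.1 c, hcons0 c]
    have h2 := hg c
    rw [h1] at h2
    have hlen := congrArg List.length h2
    simp only [List.length_append] at hlen
    have hiq : restrictC l0.inq c = [] := List.length_eq_zero_iff.mp (by omega)
    have hgi : restrictC γ.gin c = [] := List.length_eq_zero_iff.mp (by omega)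
    rw [hiq] at h1
    exact ⟨hiq, hgi, by rw [h1, List.append_nil]⟩
  have hgin : γ.gin = [] := eq_nil_of_restrictC _ (fun c => (key c).2.1)
  have hgcons : ∀ c, restrictC γ.gconsumed c = restrictC I c := fun c => (key c).2.2
  refine ⟨l0, l1, hlocs, hgin, hgcons, ?_, ?_⟩
  · -- the high execution terminates
    obtain ⟨m, hm⟩ := bigstep_tstar hrun
    have hrel : Rel lvl I l0.received := by
      intro c
      rw [hr0, hgcons c]
      exact ⟨List.prefix_refl _, fun _ => rfl⟩
    obtain ⟨K', hstar, -⟩ := tstar_sim (s := ⟨p, Mem.init, I⟩) hm hrel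
    have hV := hL0.1 []
    rw [List.append_nil, List.append_nil] at hV
    exact ⟨m, K', tstar_det_chain hV hstar (fun t ht => tstep_skip_false ht)⟩
  · -- the low execution terminates
    obtain ⟨I', O', hlow, hdef, hlen, hbig, -⟩ := hsec vdef I O hrun
    obtain ⟨m, hm⟩ := bigstep_tstar hbig
    have hrecv1 : ∀ c, restrictC l1.received c = (restrictC I c).map (dmap lvl vdef) := by
      intro c
      rw [hr1, restrictC_map (dmap_ch lvl vdef), hgcons c]
    have hrel : Rel lvl I' l1.received := by
      intro c
      rw [hrecv1 c]
      cases hlc : lvl c with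
      | L =>
        have hIc : restrictC I' c = restrictC I c := restrictC_eq_of_restrictL hlow hlc
        have hmap : (restrictC I c).map (dmap lvl vdef) = restrictC I c :=
          map_id_of (fun v hv => by
            simp [dmap, (mem_restrictC hv).2, hlc])
        rw [hmap, hIc]
        exact ⟨List.prefix_refl _, fun _ => rfl⟩
      | H =>
        constructor
        · refine const_prefix (a := ⟨c, vdef⟩) ?_ ?_ ?_
          · intro v hv
            obtain ⟨hvI, hvc⟩ := mem_restrictC hv
            have := hdef v hvI (by rw [hvc, hlc])
            cases v; cases hvc; cases this; rfl
          · intro v hv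
            obtain ⟨w, hw, hwd⟩ := List.mem_map.mp hv
            obtain ⟨-, hwc⟩ := mem_restrictC hw
            rw [← hwd]
            simp [dmap, hwc, hlc]
          · rw [List.length_map]
            exact hlen c
        · intro hL
          exact absurd hL SecLevel.noConfusion
    obtain ⟨K', hstar, -⟩ := tstar_sim (s := ⟨p, Mem.init, I'⟩) hm hrel
    have hV := hL1.1 []
    rw [List.append_nil, List.append_nil] at hV
    exact ⟨m, K', tstar_det_chain hV hstar (fun t ht => tstep_skip_false ht)⟩

/-- Output-free view of a local configuration. -/
def Vl (l : LocalConf) : TC := ⟨l.prg, l.mem, l.inq⟩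

/-- Weight of a local configuration (for the termination measure). -/
def wgt (l : LocalConf) : ℕ :=
  if l.stt = LState.E then 2
  else match l.intr with
    | some (.inSig _) => 1
    | none => 0
    | some (.outSig _) => 3

lemma locAt_pair {a b : LocalConf} {γ : EMConf} (h : γ.locs = [a, b]) :
    γ.locAt 0 = a ∧ γ.locAt 1 = b := by
  constructor <;> (rw [EMConf.locAt, h]; rfl)

lemma gin_nil_step {lvl : Chan → SecLevel} {vdef : Val} {ag : Agent} {γ γ' : EMConf}
    (h : EMStep .RI lvl vdef ag γ γ') (hgin : γ.gin = []) : γ'.gin = [] := by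
  cases h with
  | locStep hl hstep => exact hgin
  | mapRead hl hS hI hask hd => rw [hgin] at hd; cases hd
  | mapDefault hl hS hI hda => exact hda.elim
  | mapSkip hl hS hI hskip => exact hgin
  | red hl hS hI hd => exact hgin

lemma sa_combine {γ γ' : EMConf} {l0 l1 lold lnew : LocalConf} {k : ℕ}
    (hlocs : γ.locs = [l0, l1]) (hset : γ'.locs = γ.locs.set k lnew) (hk : k < 2)
    (hold : γ.locAt k = lold)
    (H : TStep (Vl lold) (Vl lnew) ∨ (Vl lnew = Vl lold ∧ wgt lnew < wgt lold)) :
    ∃ j, j < 2 ∧ (∀ i, i ≠ j → γ'.locAt i = γ.locAt i) ∧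
      (TStep (Vl (γ.locAt j)) (Vl (γ'.locAt j)) ∨
        (Vl (γ'.locAt j) = Vl (γ.locAt j) ∧ wgt (γ'.locAt j) < wgt (γ.locAt j))) := by
  refine ⟨k, hk, ?_, ?_⟩
  · intro i hi
    rw [EMConf.locAt, EMConf.locAt, hset, List.getD_eq_getElem?_getD,
      List.getD_eq_getElem?_getD, List.getElem?_set_ne (fun h => hi h.symm)]
  · have hA : γ'.locAt k = lnew := by
      rw [EMConf.locAt, hset, List.getD_eq_getElem?_getD,
        List.getElem?_set_self (by rw [hlocs]; simpa using hk)]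
      rfl
    rw [hA, hold]
    exact H

lemma step_analysis {p : Prog} {lvl : Chan → SecLevel} {vdef : Val} {I : Queue}
    {γ γ' : EMConf} {ag : Agent} (hInv : Inv p lvl vdef I γ)
    (hgin : γ.gin = []) (h : EMStep .RI lvl vdef ag γ γ') :
    ∃ j, j < 2 ∧ (∀ i, i ≠ j → γ'.locAt i = γ.locAt i) ∧
      (TStep (Vl (γ.locAt j)) (Vl (γ'.locAt j)) ∨
        (Vl (γ'.locAt j) = Vl (γ.locAt j) ∧ wgt (γ'.locAt j) < wgt (γ.locAt j))) := by
  obtain ⟨l0, l1, hlocs, -, -, -, hL0, hL1⟩ := hInv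
  obtain ⟨hat0, hat1⟩ := locAt_pair hlocs
  cases h with
  | @locStep _ i l l' hl hstep =>
    rw [hlocs] at hl
    obtain ⟨hE, hnone, -, -, hdich, hstate⟩ := lstep_char hstep
    have hVd : TStep (Vl l) (Vl l') ∨ (Vl l' = Vl l ∧ wgt l' < wgt l) := by
      cases hdich with
      | inl ht =>
        left
        have := ht []
        rw [List.append_nil, List.append_nil] at this
        exact this
      | inr hs =>
        right
        obtain ⟨h1, h2, h3, -, h5, c0, h6⟩ := hs
        constructor
        · show (⟨l'.prg, l'.mem, l'.inq⟩ : TC) = ⟨l.prg, l.mem, l.inq⟩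
          rw [h1, h2, h3]
        · rw [wgt, wgt, if_pos hE, if_neg (by rw [h5]; exact fun hh => LState.noConfusion hh),
            h6]
          exact Nat.one_lt_two
    rcases two_index hl with ⟨hi, hll⟩ | ⟨hi, hll⟩ <;> subst hi <;> subst hll
    · exact sa_combine hlocs rfl (by omega) hat0 hVd
    · exact sa_combine hlocs rfl (by omega) hat1 hVd
  | mapRead hl hS hI hask hd => rw [hgin] at hd; cases hd
  | mapDefault hl hS hI hda => exact hda.elim
  | @mapSkip _ i c l hl hS hI hskip =>
    rw [hlocs] at hl
    have hVw : Vl { l with intr := none } = Vl l ∧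
        wgt { l with intr := none } < wgt l := by
      refine ⟨rfl, ?_⟩
      rw [wgt, wgt, if_neg (by rw [hS]; exact fun hh => LState.noConfusion hh),
        if_neg (by show l.stt ≠ _; rw [hS]; exact fun hh => LState.noConfusion hh), hI]
      simp
    rcases two_index hl with ⟨hi, hll⟩ | ⟨hi, hll⟩ <;> subst hi <;> subst hll
    · exact sa_combine hlocs rfl (by omega) hat0 (.inr hVw)
    · exact sa_combine hlocs rfl (by omega) hat1 (.inr hVw)
  | @red _ i c l v out' hl hS hI hd =>
    rw [hlocs] at hl
    have hVw : Vl { l with stt := .E, intr := none, outq := out' } = Vl l ∧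
        wgt { l with stt := .E, intr := none, outq := out' } < wgt l := by
      refine ⟨rfl, ?_⟩
      rw [wgt, wgt, if_pos rfl,
        if_neg (by show l.stt ≠ _; rw [hS]; exact fun hh => LState.noConfusion hh), hI]
      simp
    rcases two_index hl with ⟨hi, hll⟩ | ⟨hi, hll⟩ <;> subst hi <;> subst hll
    · exact sa_combine hlocs rfl (by omega) hat0 (.inr hVw)
    · exact sa_combine hlocs rfl (by omega) hat1 (.inr hVw)

lemma part2 {lvl : Chan → SecLevel} {vdef : Val} {p : Prog} {I O : Queue} {γ : EMConf}
    (hsec : RI lvl p) (hrun : BigStep p I O)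
    (hreach : EMReach Mech.RI lvl vdef p I γ) (hstuck : EMStuck Mech.RI lvl vdef γ)
    (hcons : ConsumesAsIn lvl I γ) :
    γ.Terminal ∧ ∀ c, restrictC γ.gconsumed c = restrictC I c := by
  obtain ⟨a0, a1, hlocs', -, -, -, hLa0, hLa1⟩ := reach_inv hreach
  obtain ⟨l0, l1, hlocs, hgin, hgcons, hz0, hz1⟩ := core hsec hrun (reach_inv hreach) hcons
  have hid : a0 = l0 ∧ a1 = l1 := by
    rw [hlocs] at hlocs'
    injection hlocs' with h1 h2
    injection h2 with h2
    exact ⟨h1.symm, h2.symm⟩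
  have hL0 : LInv p l0 := hid.1 ▸ hLa0
  have hL1 : LInv p l1 := hid.2 ▸ hLa1
  have hskip : ∀ (i : ℕ) (l : LocalConf), γ.locs[i]? = some l → LInv p l →
      (∃ mz Kz, Relation.ReflTransGen TStep ⟨l.prg, l.mem, l.inq⟩ ⟨.skip, mz, Kz⟩) →
      l.prg = .skip := by
    rintro i l hl hL ⟨mz, Kz, hchain⟩
    rcases Relation.ReflTransGen.cases_head hchain with heq | ⟨t, hVt, -⟩
    · exact congrArg TC.prg heq
    · exfalso
      obtain ⟨ha, hb, hc, hd, he, hf⟩ := hL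
      cases hstt : l.stt with
      | E =>
        have hnone := hc hstt
        obtain ⟨stt, intr, prg, mem, inq, outq, rcv, cs⟩ := l
        simp only at hstt hnone hVt hl
        subst hstt
        subst hnone
        obtain ⟨l', hl'⟩ := tstep_exists_lstep hVt outq rcv cs
        exact hstuck (.loc i) _ (EMStep.locStep hl hl')
      | S =>
        cases hintr : l.intr with
        | none =>
          obtain ⟨c, hhd, hdq⟩ := he hstt hintr
          obtain ⟨xc, hxc, hsnd⟩ := Option.map_eq_some_iff.mp hhd
          have hxc' : l.prg.headInput = some (xc.1, c) := by
            rw [hxc, ← hsnd]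
          have hsome := tstep_headInput hVt hxc'
          rw [hdq] at hsome
          simp at hsome
        | some sig =>
          cases sig with
          | inSig c =>
            obtain ⟨-, hhd, hdq⟩ := hd c hintr
            obtain ⟨xc, hxc, hsnd⟩ := Option.map_eq_some_iff.mp hhd
            have hxc' : l.prg.headInput = some (xc.1, c) := by
              rw [hxc, ← hsnd]
            have hsome := tstep_headInput hVt hxc'
            rw [hdq] at hsome
            simp at hsome
          | outSig c =>
            obtain ⟨-, -, hdqs⟩ := hf c hintr
            obtain ⟨⟨v, out'⟩, hpr⟩ := Option.isSome_iff_exists.mp hdqs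
            exact hstuck (.redA i c) _ (EMStep.red hl hstt hintr hpr)
  refine ⟨⟨?_, hgin⟩, hgcons⟩
  intro l hl
  rw [hlocs] at hl
  rcases List.mem_cons.mp hl with h | h
  · subst h
    exact hskip 0 l (by rw [hlocs]; rfl) hL0 hz0
  · rcases List.mem_cons.mp h with h' | h'
    · subst h'
      exact hskip 1 l (by rw [hlocs]; rfl) hL1 hz1
    · simp at h'

lemma part1 {lvl : Chan → SecLevel} {vdef : Val} {p : Prog} {I O : Queue}
    (hsec : RI lvl p) (hrun : BigStep p I O) :
    ¬ ∃ f : ℕ → EMConf, f 0 = EMConf.init p I ∧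
      (∀ n, EMStepRel Mech.RI lvl vdef (f n) (f (n + 1))) ∧
      ∃ N, ∀ n, N ≤ n → ConsumesAsIn lvl I (f n) := by
  rintro ⟨f, hf0, hstep, N, hN⟩
  have hInvAll : ∀ n, Inv p lvl vdef I (f n) := by
    intro n
    induction n with
    | zero => rw [hf0]; exact inv_init p lvl vdef I
    | succ k ih =>
      obtain ⟨a, ha⟩ := hstep k
      exact inv_step ih ha
  obtain ⟨l0, l1, hlocsN, hginN, -, ⟨m0, K0, hz0⟩, ⟨m1, K1, hz1⟩⟩ :=
    core hsec hrun (hInvAll N) (hN N le_rfl)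
  obtain ⟨hat0, hat1⟩ := locAt_pair hlocsN
  have hginAll : ∀ k, (f (N + k)).gin = [] := by
    intro k
    induction k with
    | zero => exact hginN
    | succ j ih =>
      obtain ⟨a, ha⟩ := hstep (N + j)
      exact gin_nil_step ha ih
  have hsa : ∀ k, ∃ j, j < 2 ∧
      (∀ i, i ≠ j → (f (N + k + 1)).locAt i = (f (N + k)).locAt i) ∧
      (TStep (Vl ((f (N + k)).locAt j)) (Vl ((f (N + k + 1)).locAt j)) ∨
        (Vl ((f (N + k + 1)).locAt j) = Vl ((f (N + k)).locAt j) ∧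
          wgt ((f (N + k + 1)).locAt j) < wgt ((f (N + k)).locAt j))) := by
    intro k
    obtain ⟨a, ha⟩ := hstep (N + k)
    exact step_analysis (hInvAll (N + k)) (hginAll k) ha
  have hdich : ∀ i k, TStep (Vl ((f (N + k)).locAt i)) (Vl ((f (N + k + 1)).locAt i)) ∨
      Vl ((f (N + k + 1)).locAt i) = Vl ((f (N + k)).locAt i) := by
    intro i k
    obtain ⟨j, hj2, hothers, hj⟩ := hsa k
    by_cases hij : i = j
    · subst hij
      rcases hj with h | ⟨h, -⟩
      · exact .inl h
      · exact .inr h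
    · exact .inr (by rw [hothers i hij])
  by_cases hreal : ∃ i, i < 2 ∧ ∀ n, ∃ m, n ≤ m ∧
      TStep (Vl ((f (N + m)).locAt i)) (Vl ((f (N + m + 1)).locAt i))
  · obtain ⟨i, hi2, hinf⟩ := hreal
    have hi01 : i = 0 ∨ i = 1 := by omega
    rcases hi01 with rfl | rfl
    · exact noinf (R := TStep) (z := ⟨.skip, m0, K0⟩)
        (fun a b c h1 h2 => tstep_det h1 h2) (fun t ht => tstep_skip_false ht)
        (by show Relation.ReflTransGen TStep (Vl ((f N).locAt 0)) (⟨.skip, m0, K0⟩ : TC)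
            rw [hat0]; exact hz0)
        (fun k => Vl ((f (N + k)).locAt 0)) rfl
        (fun n => hdich 0 n) hinf
    · exact noinf (R := TStep) (z := ⟨.skip, m1, K1⟩)
        (fun a b c h1 h2 => tstep_det h1 h2) (fun t ht => tstep_skip_false ht)
        (by show Relation.ReflTransGen TStep (Vl ((f N).locAt 1)) (⟨.skip, m1, K1⟩ : TC)
            rw [hat1]; exact hz1)
        (fun k => Vl ((f (N + k)).locAt 1)) rfl
        (fun n => hdich 1 n) hinf
  · push_neg at hreal
    obtain ⟨n0, hn0⟩ := hreal 0 (by omega)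
    obtain ⟨n1, hn1⟩ := hreal 1 (by omega)
    apply no_strict_descent
      (fun k => wgt ((f (N + (max n0 n1 + k))).locAt 0) + wgt ((f (N + (max n0 n1 + k))).locAt 1))
    intro k
    show wgt ((f (N + (max n0 n1 + k) + 1)).locAt 0) + wgt ((f (N + (max n0 n1 + k) + 1)).locAt 1)
      < wgt ((f (N + (max n0 n1 + k))).locAt 0) + wgt ((f (N + (max n0 n1 + k))).locAt 1)
    obtain ⟨j, hj2, hothers, hj⟩ := hsa (max n0 n1 + k)
    rcases hj with h | ⟨-, hw⟩
    · exfalso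
      rcases (by omega : j = 0 ∨ j = 1) with rfl | rfl
      · exact hn0 (max n0 n1 + k) (by omega) h
      · exact hn1 (max n0 n1 + k) (by omega) h
    · rcases (by omega : j = 0 ∨ j = 1) with rfl | rfl
      · have hoth := congrArg wgt (hothers 1 (by omega))
        omega
      · have hoth := congrArg wgt (hothers 0 (by omega))
        omega

end Aux

/-- **Running lemma for RI (Lemma 2).**  Let π satisfy removal of inputs with
π(I) ⇓ O.  In the enforcement mechanism for removal of inputs, regardless of
the order in which the local executions are scheduled, if the low execution
consumes the same low input items as in I and the high execution consumes the
high and low input items as in I, then the execution of the enforcement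
mechanism terminates, and the input queue I* it consumes satisfies
I*|_c = I|_c for every input channel c. -/
theorem running_lemma_RI (lvl : Chan → SecLevel) (vdef : Val) (p : Prog)
    (I O : Queue) (hsec : RI lvl p) (hrun : BigStep p I O) :
    (¬ ∃ f : ℕ → EMConf, f 0 = EMConf.init p I ∧
        (∀ n, EMStepRel Mech.RI lvl vdef (f n) (f (n + 1))) ∧
        ∃ N, ∀ n, N ≤ n → ConsumesAsIn lvl I (f n)) ∧
    ∀ γ, EMReach Mech.RI lvl vdef p I γ → EMStuck Mech.RI lvl vdef γ →
      ConsumesAsIn lvl I γ →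
      γ.Terminal ∧ ∀ c, restrictC γ.gconsumed c = restrictC I c := by
  constructor
  · exact part1 hsec hrun
  · intro γ hreach hstuck hcons
    exact part2 hsec hrun hreach hstuck hcons

end MapReduce
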